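/- arXiv:2103.09286 — 4 statements merged into one kernel-verified Lean document; each statement's English description precedes it below -/
import Mathlib

section
/- For every m ≥ k ≥ 1 and integers 1 ≤ a_1 < a_2 < ... < a_{k+1} ≤ n, the stair convex k-chain satisfies the non-recursive formula: stc^m_k(a_1,...,a_{k+1}) equals the sum over all (t_1,...,t_{k+1}) in N_0^{k+1} with t_1 + ... + t_{k+1} = m − k of the product stc^{t_1}_0(a_1) × ∏_{i=1}^{k} ([a_i, a_{i+1}] × stc^{t_{i+1}}_0(a_{i+1})). -/
/-- A cell of a grid complex `G[n]^m`: a list of `m` factors, each either a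
vertex `{a}` (encoded `(a, false)`) or a unit interval `[a, a+1]` (encoded `(a, true)`). -/
abbrev GCell := List (ℕ × Bool)

/-- Cellular chains with `ℤ/2` coefficients. -/
abbrev GChain := GCell →₀ ZMod 2

/-- Product of chains, induced by concatenation of cells. -/
noncomputable def prodC (α β : GChain) : GChain :=
  α.sum fun c x => β.sum fun d y => Finsupp.single (c ++ d) (x * y)

/-- The vertex `{a}` of `G[n]`, as a chain. -/
noncomputable def vtx (a : ℕ) : GChain := Finsupp.single [(a, false)] 1

/-- The unit interval `[a, a+1]` of `G[n]`, as a chain. -/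
noncomputable def seg (a : ℕ) : GChain := Finsupp.single [(a, true)] 1

/-- The 1-chain `[a,b] = [a,a+1] + ... + [b-1,b]` (symmetrized so `[b,a] = [a,b]`). -/
noncomputable def intervalC (a b : ℕ) : GChain :=
  ∑ j ∈ Finset.Ico (min a b) (max a b), seg j

/-- The diagonal vertex `(a, ..., a)` of `G[n]^m`. -/
noncomputable def diag (m a : ℕ) : GChain := Finsupp.single (List.replicate m (a, false)) 1

/-- Stair convex chains, with the list of parameters in *reverse* (decreasing) order. -/
noncomputable def stcR : ℕ → List ℕ → GChain
  | 0, [_] => Finsupp.single [] 1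
  | 0, _ => 0
  | _ + 1, [] => 0
  | m + 1, [a] => prodC (stcR m [a]) (vtx a)
  | m + 1, b :: c :: rest =>
      prodC (stcR m (c :: rest)) (intervalC c b) + prodC (stcR m (b :: c :: rest)) (vtx b)

/-- The stair convex chain `stc^m_k (a₁, ..., a_{k+1})` where the parameters are
given as the (increasing) list `l = [a₁, ..., a_{k+1}]` with `k = l.length - 1`. -/
noncomputable def stc (m : ℕ) (l : List ℕ) : GChain := stcR m l.reverse

/-- Boundary of a cell, via the product rule `∂(σ×τ) = ∂σ×τ + σ×∂τ`,
`∂{a} = 0`, `∂[a,a+1] = {a} + {a+1}`. -/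
noncomputable def bndCell : GCell → GChain
  | [] => 0
  | (a, false) :: rest => prodC (vtx a) (bndCell rest)
  | (a, true) :: rest =>
      prodC (vtx a + vtx (a + 1)) (Finsupp.single rest 1) + prodC (seg a) (bndCell rest)

/-- The boundary operator on chains, extended linearly. -/
noncomputable def bnd (α : GChain) : GChain := α.sum fun c x => x • bndCell c

/-- Ordered product of a list of chains. -/
noncomputable def bigProd (l : List GChain) : GChain := l.foldr prodC (Finsupp.single [] 1)

/-- `c` is a cell of the grid complex `G[n]^m`. -/
def isCellOf (m n : ℕ) (c : GCell) : Prop :=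
  c.length = m ∧ ∀ e ∈ c, 1 ≤ e.1 ∧ (if e.2 then e.1 + 1 else e.1) ≤ n

/-- Dimension of a cell: the number of interval factors. -/
def dimCell (c : GCell) : ℕ := (c.filter fun e => e.2).length

abbrev MAlg := MonoidAlgebra (ZMod 2) (FreeMonoid (ℕ × Bool))

noncomputable abbrev toM (α : GChain) : MAlg :=
  MonoidAlgebra.ofCoeff (α : FreeMonoid (ℕ × Bool) →₀ ZMod 2)

noncomputable abbrev ofM (x : MAlg) : GChain := x.coeff

lemma toM_coeff (x : MAlg) : toM (ofM x) = x := rfl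

lemma prodC_eq (α β : GChain) :
    prodC α β = ofM (toM α * toM β) := by
  unfold prodC
  simp only [MonoidAlgebra.mul_def, Finsupp.sum, MonoidAlgebra.coeff_sum,
    MonoidAlgebra.coeff_single]
  rfl

lemma one_eq : (Finsupp.single [] 1 : GChain) = ofM (1 : MAlg) := rfl

lemma prodC_assoc (a b c : GChain) : prodC (prodC a b) c = prodC a (prodC b c) := by
  simp only [prodC_eq, toM_coeff, mul_assoc]

lemma prodC_one_right (a : GChain) : prodC a (Finsupp.single [] 1) = a := by
  rw [prodC_eq, one_eq, toM_coeff, mul_one]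

lemma prodC_one_left (a : GChain) : prodC (Finsupp.single [] 1) a = a := by
  rw [prodC_eq, one_eq, toM_coeff, one_mul]

lemma prodC_zero_left (β : GChain) : prodC 0 β = 0 := by
  rw [prodC_eq]; exact congrArg ofM (zero_mul (M₀ := MAlg) _)

lemma sum_prodC {ι : Type*} (s : Finset ι) (f : ι → GChain) (c : GChain) :
    prodC (∑ i ∈ s, f i) c = ∑ i ∈ s, prodC (f i) c := by
  rw [show (∑ i ∈ s, f i) = ofM (∑ i ∈ s, toM (f i)) by
    rw [ofM, MonoidAlgebra.coeff_sum]; rfl]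
  rw [prodC_eq, toM_coeff, Finset.sum_mul, ofM, MonoidAlgebra.coeff_sum]
  exact Finset.sum_congr rfl fun i _ => (prodC_eq _ _).symm

lemma single_append (c d : GCell) (x y : ZMod 2) :
    prodC (Finsupp.single c x) (Finsupp.single d y) = Finsupp.single (c ++ d) (x * y) := by
  rw [prodC_eq]
  exact congrArg ofM
    (MonoidAlgebra.single_mul_single (R := ZMod 2) (M := FreeMonoid (ℕ × Bool)) c d x y)

lemma diag_succ (j a : ℕ) : diag (j + 1) a = prodC (diag j a) (vtx a) := by
  rw [diag, diag, vtx, single_append, mul_one, List.replicate_succ']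

lemma stcR_eq_zero : ∀ (m : ℕ) (l : List ℕ), m + 2 ≤ l.length → stcR m l = 0
  | 0, [], h => by simp at h
  | 0, [a], h => by simp at h
  | 0, a :: b :: l, _ => rfl
  | m + 1, [], h => rfl
  | m + 1, [a], h => by simp at h
  | m + 1, [a, b], h => by simp at h
  | m + 1, a :: b :: c :: l, h => by
      have h1 : m + 2 ≤ (b :: c :: l).length := by simp at h ⊢; omega
      have h2 : m + 2 ≤ (a :: b :: c :: l).length := by simp at h ⊢; omega
      rw [stcR, stcR_eq_zero m _ h1, stcR_eq_zero m _ h2, prodC_zero_left, prodC_zero_left,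
        add_zero]

lemma stcR_single (m a : ℕ) : stcR m [a] = diag m a := by
  induction m with
  | zero => rfl
  | succ m ih => rw [stcR, ih, diag_succ]

lemma rev_ofFn {k : ℕ} (a : Fin (k + 1) → ℕ) :
    (List.ofFn a).reverse = a (Fin.last k) :: (List.ofFn fun i => a i.castSucc).reverse := by
  rw [List.ofFn_succ', List.concat_eq_append, List.reverse_append]
  rfl

lemma stc_rec (m k : ℕ) (a : Fin (k + 2) → ℕ) :
    stc (m + 1) (List.ofFn a) =
      prodC (stc m (List.ofFn fun i => a i.castSucc))
          (intervalC (a (Fin.castSucc (Fin.last k))) (a (Fin.last (k + 1)))) +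
        prodC (stc m (List.ofFn a)) (vtx (a (Fin.last (k + 1)))) := by
  unfold stc
  rw [rev_ofFn a, rev_ofFn fun i => a i.castSucc, stcR,
    ← rev_ofFn fun i => a i.castSucc, ← rev_ofFn a]

open Finset in
lemma sum_AT_snoc {M : Type*} [AddCommMonoid M] (k N : ℕ) (f : (Fin (k + 1) → ℕ) → M) :
    ∑ t ∈ Finset.Nat.antidiagonalTuple (k + 1) N, f t =
      ∑ p ∈ Finset.HasAntidiagonal.antidiagonal N, ∑ s ∈ Finset.Nat.antidiagonalTuple k p.1,
        f (Fin.snoc s p.2) := by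
  rw [Finset.sum_sigma']
  refine Finset.sum_nbij'
    (i := fun t => (⟨(∑ i : Fin k, t i.castSucc, t (Fin.last k)), Fin.init t⟩ :
      Σ _ : ℕ × ℕ, Fin k → ℕ))
    (j := fun q => Fin.snoc q.2 q.1.2) ?_ ?_ ?_ ?_ ?_
  · intro t ht
    rw [Finset.Nat.mem_antidiagonalTuple] at ht
    simp only [Finset.mem_sigma, Finset.HasAntidiagonal.mem_antidiagonal, Finset.Nat.mem_antidiagonalTuple]
    exact ⟨by rw [← ht, Fin.sum_univ_castSucc], rfl⟩
  · intro q hq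
    simp only [Finset.mem_sigma, Finset.HasAntidiagonal.mem_antidiagonal,
      Finset.Nat.mem_antidiagonalTuple] at hq
    rw [Finset.Nat.mem_antidiagonalTuple, Fin.sum_univ_castSucc]
    simp only [Fin.snoc_castSucc, Fin.snoc_last]
    rw [hq.2, hq.1]
  · intro t _
    exact Fin.snoc_init_self t
  · rintro ⟨⟨x, y⟩, s⟩ hq
    simp only [Finset.mem_sigma, Finset.HasAntidiagonal.mem_antidiagonal,
      Finset.Nat.mem_antidiagonalTuple] at hq
    simp only [Fin.snoc_castSucc, Fin.snoc_last, Fin.init_snoc]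
    rw [hq.2]
  · intro t _
    rw [Fin.snoc_init_self]

noncomputable def S (k : ℕ) (a t : Fin (k + 1) → ℕ) : GChain :=
  prodC (diag (t 0) (a 0)) (bigProd (List.ofFn fun i : Fin k =>
    prodC (intervalC (a i.castSucc) (a i.succ)) (diag (t i.succ) (a i.succ))))

lemma bigProd_concat (l : List GChain) (x : GChain) :
    bigProd (l ++ [x]) = prodC (bigProd l) x := by
  induction l with
  | nil =>
      show prodC x (Finsupp.single [] 1) = prodC (Finsupp.single [] 1) x
      rw [prodC_one_right, prodC_one_left]
  | cons y l ih =>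
      show prodC y (bigProd (l ++ [x])) = _
      show prodC y (bigProd (l ++ [x])) = prodC (prodC y (bigProd l)) x
      rw [ih, prodC_assoc]

lemma S_snoc (k : ℕ) (a : Fin (k + 2) → ℕ) (s : Fin (k + 1) → ℕ) (j : ℕ) :
    S (k + 1) a (Fin.snoc s j) =
      prodC (prodC (S k (fun i => a i.castSucc) s)
        (intervalC (a (Fin.castSucc (Fin.last k))) (a (Fin.last (k + 1)))))
        (diag j (a (Fin.last (k + 1)))) := by
  unfold S
  rw [List.ofFn_succ', List.concat_eq_append, bigProd_concat]
  simp only [Fin.succ_castSucc, Fin.snoc_castSucc, Fin.succ_last, Fin.snoc_last]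
  rw [show ((Fin.snoc s j : Fin (k + 2) → ℕ) 0) = s 0 from by
    rw [show (0 : Fin (k + 2)) = Fin.castSucc 0 from rfl, Fin.snoc_castSucc]]
  rw [show (a 0) = (fun i : Fin (k+1) => a i.castSucc) 0 from rfl]
  rw [← prodC_assoc, ← prodC_assoc]

lemma sum_split (k N : ℕ) (a : Fin (k + 2) → ℕ) :
    ∑ t ∈ Finset.Nat.antidiagonalTuple (k + 2) N, S (k + 1) a t =
      ∑ p ∈ Finset.HasAntidiagonal.antidiagonal N,
        prodC (prodC (∑ s ∈ Finset.Nat.antidiagonalTuple (k + 1) p.1,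
            S k (fun i => a i.castSucc) s)
          (intervalC (a (Fin.castSucc (Fin.last k))) (a (Fin.last (k + 1)))))
        (diag p.2 (a (Fin.last (k + 1)))) := by
  rw [sum_AT_snoc (k + 1) N]
  refine Finset.sum_congr rfl fun p hp => ?_
  rw [Finset.sum_congr rfl fun s hs => S_snoc k a s p.2, sum_prodC, sum_prodC]

lemma key0 (m : ℕ) (a : Fin 1 → ℕ) :
    stc m (List.ofFn a) = ∑ t ∈ Finset.Nat.antidiagonalTuple 1 (m - 0), S 0 a t := by
  rw [Nat.sub_zero, Finset.Nat.antidiagonalTuple_one, Finset.sum_singleton]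
  have h1 : List.ofFn a = [a 0] := by simp [List.ofFn_succ]
  rw [h1]
  show stcR m [a 0] = _
  rw [stcR_single]
  unfold S
  rw [List.ofFn_zero]
  show _ = prodC (diag m (a 0)) (Finsupp.single [] 1)
  rw [prodC_one_right]

set_option maxHeartbeats 2000000 in
lemma key : ∀ (m k : ℕ) (a : Fin (k + 1) → ℕ), k ≤ m →
    stc m (List.ofFn a) = ∑ t ∈ Finset.Nat.antidiagonalTuple (k + 1) (m - k), S k a t := by
  intro m
  induction m with
  | zero =>
      intro k a hk
      obtain rfl : k = 0 := Nat.le_zero.mp hk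
      exact key0 0 a
  | succ m ih =>
      intro k a hk
      match k with
      | 0 => exact key0 (m + 1) a
      | k + 1 =>
        rw [stc_rec m k a, ih k (fun i => a i.castSucc) (by omega)]
        by_cases hc : k + 1 ≤ m
        · rw [ih (k + 1) a hc]
          have hM1 : m - k = (m - (k + 1)) + 1 := by omega
          have hM2 : m + 1 - (k + 1) = (m - (k + 1)) + 1 := by omega
          rw [hM1, hM2]
          conv_rhs => rw [sum_split, Finset.Nat.antidiagonal_succ', Finset.sum_cons,
            Finset.sum_map]
          refine congrArg₂ (· + ·) ?_ ?_
          · show prodC _ _ = prodC (prodC _ _) (diag 0 _)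
            rw [show diag 0 (a (Fin.last (k + 1))) = Finsupp.single [] 1 from rfl,
              prodC_one_right]
          · rw [sum_split, sum_prodC]
            refine Finset.sum_congr rfl fun p hp => ?_
            rw [prodC_assoc, ← diag_succ]
            simp [Prod.map]
        · have hm : m = k := by omega
          have hz : stc m (List.ofFn a) = 0 := by
            rw [stc]
            refine stcR_eq_zero m _ ?_
            simp [hm]
          rw [hz, prodC_zero_left, add_zero]
          have h0 : m + 1 - (k + 1) = 0 := by omega
          have h0' : m - k = 0 := by omega
          rw [h0, h0', sum_split, Finset.Nat.antidiagonal_zero, Finset.sum_singleton]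
          show prodC _ _ = prodC (prodC _ _) (diag 0 _)
          rw [show diag 0 (a (Fin.last (k + 1))) = Finsupp.single [] 1 from rfl,
            prodC_one_right]

/-- Non-recursive ("unwrapped") formula for the stair convex chain: for `m ≥ k ≥ 1` and
`1 ≤ a₁ < ... < a_{k+1} ≤ n`,
`stc^m_k(a₁,...,a_{k+1}) = Σ_{t₁+...+t_{k+1} = m-k} stc^{t₁}_0(a₁) ×
  ∏_{i=1}^{k} ([aᵢ, a_{i+1}] × stc^{t_{i+1}}_0(a_{i+1}))`. -/
theorem stmt2 (n m k : ℕ) (hk : 1 ≤ k) (hkm : k ≤ m)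
    (a : Fin (k + 1) → ℕ) (ha : StrictMono a) (h1 : 1 ≤ a 0) (hn : a (Fin.last k) ≤ n) :
    stc m (List.ofFn a) =
      ∑ t ∈ Finset.Nat.antidiagonalTuple (k + 1) (m - k),
        prodC (diag (t 0) (a 0))
          (bigProd (List.ofFn fun i : Fin k =>
            prodC (intervalC (a i.castSucc) (a i.succ)) (diag (t i.succ) (a i.succ)))) := by
  have h := key m k a hkm
  simpa [S] using h
end

section
/- If an axis-aligned hyperplane {x_j = a} in the grid complex G[n]^m contains a k-dimensional cell of the support of the stair convex chain stc^m_k(a_1,...,a_{k+1}), then a ∈ {a_1,...,a_{k+1}}. -/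

lemma mem_support_prodC {α β : GChain} {c : GCell} (h : c ∈ (prodC α β).support) :
    ∃ d ∈ α.support, ∃ e ∈ β.support, c = d ++ e := by
  have h1 := Finsupp.support_sum h
  rw [Finset.mem_biUnion] at h1
  obtain ⟨d, hd, h2⟩ := h1
  have h3 := Finsupp.support_sum h2
  rw [Finset.mem_biUnion] at h3
  obtain ⟨e, he, h4⟩ := h3
  have := Finsupp.support_single_subset h4
  simp at this
  exact ⟨d, hd, e, he, this⟩

lemma mem_support_vtx {a : ℕ} {c : GCell} (h : c ∈ (vtx a).support) : c = [(a, false)] := by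
  have := Finsupp.support_single_subset h
  simpa using this

lemma mem_support_intervalC {a b : ℕ} {c : GCell} (h : c ∈ (intervalC a b).support) :
    ∃ j, c = [(j, true)] := by
  have h1 := Finsupp.support_finset_sum h
  rw [Finset.mem_biUnion] at h1
  obtain ⟨j, _, h2⟩ := h1
  have := Finsupp.support_single_subset h2
  simp at this
  exact ⟨j, this⟩

lemma stcR_support_false {m : ℕ} : ∀ {l : List ℕ} {c : GCell},
    c ∈ (stcR m l).support → ∀ v, (v, false) ∈ c → v ∈ l := by
  induction m with
  | zero =>
    rintro l c hc v hv
    match l with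
    | [x] =>
      rw [stcR] at hc
      have : c = [] := by simpa using Finsupp.support_single_subset hc
      subst this; simp at hv
    | [] => simp [stcR] at hc
    | _ :: _ :: _ => simp [stcR] at hc
  | succ m ih =>
    rintro l c hc v hv
    match l with
    | [] => simp [stcR] at hc
    | [a] =>
      rw [stcR] at hc
      obtain ⟨d, hd, e, he, rfl⟩ := mem_support_prodC hc
      rw [mem_support_vtx he] at hv
      rcases List.mem_append.mp hv with h | h
      · exact ih hd v h
      · simp at h; simp [h]
    | b :: a :: rest =>
      rw [stcR] at hc
      have hc' := Finsupp.support_add hc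
      rcases Finset.mem_union.mp hc' with h | h
      · obtain ⟨d, hd, e, he, rfl⟩ := mem_support_prodC h
        obtain ⟨jj, rfl⟩ := mem_support_intervalC he
        rcases List.mem_append.mp hv with h' | h'
        · exact List.mem_cons_of_mem b (ih hd v h')
        · simp at h'
      · obtain ⟨d, hd, e, he, rfl⟩ := mem_support_prodC h
        rw [mem_support_vtx he] at hv
        rcases List.mem_append.mp hv with h' | h'
        · exact ih hd v h'
        · simp at h'; simp [h']

/-- If an axis-aligned hyperplane `x_j = v` contains a `k`-dimensional cell of the
support of `stc^m_k(a₁,...,a_{k+1})` (i.e. the `j`-th factor of the cell is the constant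
vertex `{v}`), then `v ∈ {a₁, ..., a_{k+1}}`. -/
theorem stmt3 (n m k : ℕ) (hk : 1 ≤ k) (hkm : k ≤ m)
    (a : Fin (k + 1) → ℕ) (ha : StrictMono a) (h1 : 1 ≤ a 0) (hn : a (Fin.last k) ≤ n)
    (c : GCell) (hc : c ∈ (stc m (List.ofFn a)).support)
    (hdim : dimCell c = k)
    (j : ℕ) (hj : j < c.length) (v : ℕ) (hv : c.get ⟨j, hj⟩ = (v, false)) :
    ∃ i : Fin (k + 1), a i = v := by
  have hmem : (v, false) ∈ c := by
    rw [← hv]; exact List.get_mem c ⟨j, hj⟩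
  have := stcR_support_false hc v hmem
  rw [List.mem_reverse, List.mem_ofFn] at this
  exact this
end

section
/- For any m, ℓ, q there exists N = N(m,ℓ,q) such that for every coloring of the grid [N]^m with q colors, there exist strictly increasing functions γ_1, ..., γ_m : [ℓ] → [N] such that all points (γ_1(x_1), ..., γ_m(x_m)) for (x_1,...,x_m) ∈ [ℓ]^m receive the same color. -/
private lemma pigeon (l : ℕ) (β : Type*) [Fintype β] [DecidableEq β] :
    ∃ N : ℕ, ∀ χ : Fin N → β, ∃ δ : Fin l → Fin N, StrictMono δ ∧
      ∃ b, ∀ x, χ (δ x) = b := by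
  refine ⟨Fintype.card β * l + 1, fun χ => ?_⟩
  obtain ⟨b, hb⟩ := Fintype.exists_lt_card_fiber_of_mul_lt_card (n := l) χ (by simp)
  obtain ⟨t, hts, htc⟩ := Finset.exists_subset_card_eq hb.le
  refine ⟨t.orderEmbOfFin htc, (t.orderEmbOfFin htc).strictMono, b, fun x => ?_⟩
  have := hts (t.orderEmbOfFin_mem htc x)
  simpa using (Finset.mem_filter.mp this).2

private lemma grid_aux (l : ℕ) (α : Type) [Fintype α] :
    ∀ m : ℕ, ∃ N : ℕ, ∀ χ : (Fin m → Fin N) → α,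
      ∃ γ : Fin m → (Fin l → Fin N), (∀ i, StrictMono (γ i)) ∧
        ∃ c : α, ∀ x : Fin m → Fin l, χ (fun i => γ i (x i)) = c := by
  intro m
  induction m with
  | zero =>
    exact ⟨0, fun χ => ⟨fun i => i.elim0, fun i => i.elim0, χ (fun i => i.elim0),
      fun x => by congr 1; funext i; exact i.elim0⟩⟩
  | succ m ih =>
    classical
    obtain ⟨N1, h1⟩ := ih
    obtain ⟨N2, h2⟩ := pigeon l ((Fin m → Fin N1) → α)
    refine ⟨max N1 N2, fun χ => ?_⟩
    have hc1 : N1 ≤ max N1 N2 := le_max_left _ _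
    have hc2 : N2 ≤ max N1 N2 := le_max_right _ _
    set χ2 : Fin N2 → ((Fin m → Fin N1) → α) :=
      fun t y => χ (Fin.cons (Fin.castLE hc2 t) (fun i => Fin.castLE hc1 (y i))) with hχ2
    obtain ⟨δ, hδ, b, hbδ⟩ := h2 χ2
    obtain ⟨γ0, hγ0, c, hcb⟩ := h1 b
    refine ⟨Fin.cons (fun t => Fin.castLE hc2 (δ t))
      (fun i t => Fin.castLE hc1 (γ0 i t)), ?_, c, ?_⟩
    · intro i
      refine Fin.cases ?_ ?_ i
      · simp; exact (Fin.strictMono_castLE hc2).comp hδ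
      · intro j
        simp; exact (Fin.strictMono_castLE hc1).comp (hγ0 j)
    · intro x
      have key : (fun i => (Fin.cons (fun t => Fin.castLE hc2 (δ t))
            (fun i t => Fin.castLE hc1 (γ0 i t)) : Fin (m+1) → Fin l → Fin (max N1 N2)) i (x i))
          = Fin.cons (Fin.castLE hc2 (δ (x 0)))
              (fun i => Fin.castLE hc1 (γ0 i (x i.succ))) := by
        funext i
        refine Fin.cases ?_ ?_ i <;> simp
      rw [key]
      have : χ2 (δ (x 0)) (fun i => γ0 i (x i.succ)) = c := by
        rw [hbδ (x 0)]; exact hcb _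
      simpa [hχ2] using this

/-- Monochromatic subgrid lemma: for any `m, ℓ, q` there is an `N` such that every
`q`-coloring of the grid `[N]^m` contains a monochromatic combinatorial subgrid of
side `ℓ`, given by strictly increasing maps `γ_i : [ℓ] → [N]` in each coordinate. -/
theorem stmt7 (m l q : ℕ) :
    ∃ N : ℕ, ∀ χ : (Fin m → Fin N) → Fin q,
      ∃ γ : Fin m → (Fin l → Fin N), (∀ i, StrictMono (γ i)) ∧
        ∃ col : Fin q, ∀ x : Fin m → Fin l, χ (fun i => γ i (x i)) = col := by
  exact grid_aux l (Fin q) m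
end

section
/- Subgrid lemma: for any b, k, m, ℓ ∈ N with ℓ ≥ 2, there exists N = N(b,k,m,ℓ) such that for any group homomorphism h from the group of Z_2-valued k-chains of the grid complex G[N]^m to (Z_2)^b, there exists a subgrid γ : G[ℓ]^m ↪ G[N]^m lying in the kernel of h, i.e., h(γ_#(c)) = 0 for every k-chain c of G[ℓ]^m. -/
/-- The image of a cell under a subgrid map `γ` (coordinatewise strictly increasing
relabelings): vertex factors `{a}` go to `{γᵢ(a)}` and interval factors `[a,a+1]` go
to the 1-chains `[γᵢ(a), γᵢ(a+1)]`. The first argument tracks the coordinate index. -/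
noncomputable def sgCell (γ : ℕ → ℕ → ℕ) : ℕ → GCell → GChain
  | _, [] => Finsupp.single [] 1
  | j, (a, false) :: rest => prodC (vtx (γ j a)) (sgCell γ (j + 1) rest)
  | j, (a, true) :: rest => prodC (intervalC (γ j a) (γ j (a + 1))) (sgCell γ (j + 1) rest)

/-- The chain map `γ_#` induced by a subgrid. -/
noncomputable def sgMap (γ : ℕ → ℕ → ℕ) (α : GChain) : GChain :=
  α.sum fun c x => x • sgCell γ 0 c

-- basic algebra
lemma gchain_add_self (x : GChain) : x + x = 0 := by
  have h : (2 : ZMod 2) • x = x + x := two_smul _ x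
  have h2 : (2 : ZMod 2) = 0 := by decide
  rw [h2, zero_smul] at h; exact h.symm

lemma prodC_zero_right (α : GChain) : prodC α 0 = 0 := by
  simp [prodC]

lemma prodC_add_right (α β γ : GChain) :
    prodC α (β + γ) = prodC α β + prodC α γ := by
  unfold prodC
  rw [← Finsupp.sum_add]
  apply Finsupp.sum_congr
  intro c _
  rw [Finsupp.sum_add_index']
  · intro d; simp
  · intro d y1 y2; rw [mul_add, Finsupp.single_add]

lemma prodC_add_left (α β γ : GChain) :
    prodC (α + β) γ = prodC α γ + prodC β γ := by
  unfold prodC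
  rw [Finsupp.sum_add_index']
  · intro c; simp
  · intro c x1 x2
    rw [← Finsupp.sum_add]
    apply Finsupp.sum_congr
    intro d _
    rw [add_mul, Finsupp.single_add]

lemma prodC_list_sum (x : GChain) (L : List GChain) :
    prodC x L.sum = (L.map (prodC x)).sum := by
  induction L with
  | nil => simp [prodC_zero_right]
  | cons a L ih => simp [List.sum_cons, prodC_add_right, ih]

lemma intervalC_split (a b : ℕ) : intervalC a b = intervalC 0 a + intervalC 0 b := by
  have key : ∀ u v : ℕ, u ≤ v → intervalC u v = intervalC 0 u + intervalC 0 v := by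
    intro u v huv
    unfold intervalC
    rw [min_eq_left huv, max_eq_right huv,
      min_eq_left (Nat.zero_le u), max_eq_right (Nat.zero_le u),
      min_eq_left (Nat.zero_le v), max_eq_right (Nat.zero_le v)]
    rw [← Finset.sum_Ico_consecutive (fun j => seg j) (Nat.zero_le u) huv]
    rw [← add_assoc, gchain_add_self, zero_add]
  rcases le_total a b with h | h
  · exact key a b h
  · rw [show intervalC a b = intervalC b a by unfold intervalC; rw [min_comm, max_comm],
      key b a h, add_comm]

lemma ramsey (ℓ : ℕ) (hℓ : 1 ≤ ℓ) :
    ∀ j : ℕ, ∀ (K : Type) [Fintype K] [DecidableEq K], ∃ N : ℕ,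
      ∀ C : (ℕ → ℕ) → K, ∃ γ : ℕ → ℕ → ℕ,
        (∀ i < j, StrictMonoOn (γ i) (Set.Icc 1 ℓ)) ∧
        (∀ i < j, ∀ a, 1 ≤ a → a ≤ ℓ → 1 ≤ γ i a ∧ γ i a ≤ N) ∧
        (∀ t t' : ℕ → ℕ,
          (∀ i < j, (1 ≤ t i ∧ t i ≤ ℓ) ∧ (1 ≤ t' i ∧ t' i ≤ ℓ)) →
          C (fun i => if i < j then γ i (t i) else 0) =
            C (fun i => if i < j then γ i (t' i) else 0)) := by
  intro j
  induction j with
  | zero =>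
    intro K _ _
    refine ⟨1, fun C => ⟨fun _ a => a, ?_, ?_, ?_⟩⟩
    · intro i hi; omega
    · intro i hi; omega
    · intro t t' _; rfl
  | succ j IH =>
    intro K _ _
    set T := (ℓ - 1) * Fintype.card K + 1 with hT
    obtain ⟨N', hN'⟩ := IH (Fin T → K)
    refine ⟨max N' T, ?_⟩
    intro C
    set C' : (ℕ → ℕ) → (Fin T → K) :=
      fun x s => C (Function.update x j (s.val + 1)) with hC'def
    obtain ⟨γ', hmono', hbd', hconst'⟩ := hN' C'
    have hcardK : 0 < Fintype.card K :=
      Fintype.card_pos_iff.mpr ⟨C' (fun _ => 0) ⟨0, by omega⟩⟩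
    set g : Fin T → K := C' (fun i => if i < j then γ' i 1 else 0) with hg
    obtain ⟨k₀, -, hk₀⟩ := Finset.exists_lt_card_fiber_of_mul_lt_card_of_maps_to
      (s := (Finset.univ : Finset (Fin T))) (t := (Finset.univ : Finset K))
      (f := g) (n := ℓ - 1) (fun a _ => Finset.mem_univ _)
      (by simp only [Finset.card_univ, Fintype.card_fin, hT]; rw [Nat.mul_comm]; omega)
    set F : Finset (Fin T) := Finset.univ.filter (fun s => g s = k₀) with hF
    have hFcard : ℓ ≤ F.card := by omega
    set emb := F.orderEmbOfCardLe hFcard with hemb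
    have hlt : ∀ a : ℕ, min (a - 1) (ℓ - 1) < ℓ := by intro a; omega
    set γj : ℕ → ℕ := fun a => (emb ⟨min (a - 1) (ℓ - 1), hlt a⟩).val + 1 with hγj
    set γ : ℕ → ℕ → ℕ := fun i => if i = j then γj else γ' i with hγ
    have hγlt : ∀ i, i < j → γ i = γ' i := by
      intro i hi; simp only [hγ]; rw [if_neg (by omega)]
    refine ⟨γ, ?_, ?_, ?_⟩
    · intro i hi
      rcases Nat.lt_succ_iff_lt_or_eq.mp hi with hi' | rfl
      · rw [hγlt i hi']; exact hmono' i hi'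
      · intro a ha b hb hab
        simp only [hγ, if_pos rfl, hγj]
        simp only [Set.mem_Icc] at ha hb
        have h1 : min (a - 1) (ℓ - 1) = a - 1 := by omega
        have h2 : min (b - 1) (ℓ - 1) = b - 1 := by omega
        have : (⟨min (a - 1) (ℓ - 1), hlt a⟩ : Fin ℓ) < ⟨min (b - 1) (ℓ - 1), hlt b⟩ := by
          simp only [Fin.mk_lt_mk, h1, h2]; omega
        have := emb.strictMono this
        simp only [Fin.lt_def] at this
        omega
    · intro i hi a ha1 ha2
      rcases Nat.lt_succ_iff_lt_or_eq.mp hi with hi' | rfl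
      · rw [hγlt i hi']
        have := hbd' i hi' a ha1 ha2
        omega
      · simp only [hγ, if_pos rfl, hγj]
        have : ((emb ⟨min (a - 1) (ℓ - 1), hlt a⟩ : Fin T) : ℕ) < T := Fin.is_lt _
        omega
    · have key : ∀ t : ℕ → ℕ, (∀ i < j + 1, 1 ≤ t i ∧ t i ≤ ℓ) →
          C (fun i => if i < j + 1 then γ i (t i) else 0) = k₀ := by
        intro t ht
        set s : Fin T := emb ⟨min (t j - 1) (ℓ - 1), hlt (t j)⟩ with hs
        have hsmem : s ∈ F := Finset.orderEmbOfCardLe_mem F hFcard _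
        have hgs : g s = k₀ := by
          rw [hF] at hsmem; simpa using hsmem
        have hup : (fun i => if i < j + 1 then γ i (t i) else 0) =
            Function.update (fun i => if i < j then γ' i (t i) else 0) j (s.val + 1) := by
          funext i
          rcases eq_or_ne i j with rfl | hij
          · simp only [Function.update_self, if_pos (Nat.lt_succ_self _)]
            simp only [hγ, if_pos rfl, hγj, hs]
          · rw [Function.update_of_ne hij]
            rcases Nat.lt_or_ge i j with hij' | hij'
            · rw [if_pos (by omega), if_pos hij', hγlt i hij']
            · rw [if_neg (by omega), if_neg (by omega)]
        rw [hup]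
        have h1 : C (Function.update (fun i => if i < j then γ' i (t i) else 0) j (s.val + 1))
            = C' (fun i => if i < j then γ' i (t i) else 0) s := rfl
        rw [h1]
        have h2 := hconst' t (fun _ => 1) (by
          intro i hi
          exact ⟨(ht i (by omega)).imp id id, ⟨le_refl 1, hℓ⟩⟩)
        rw [h2]
        exact hgs
      intro t t' ht
      rw [key t (fun i hi => ((ht i hi).1)), key t' (fun i hi => ((ht i hi).2))]

noncomputable def mprL (γ : ℕ → ℕ → ℕ) : ℕ → List (ℕ × Bool) → GChain
  | _, [] => Finsupp.single [] 1
  | j, (t, false) :: r => prodC (vtx (γ j t)) (mprL γ (j + 1) r)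
  | j, (t, true) :: r => prodC (intervalC 0 (γ j t)) (mprL γ (j + 1) r)

noncomputable def mprN (x : ℕ → ℕ) (p : ℕ → Bool) : ℕ → ℕ → GChain
  | _, 0 => Finsupp.single [] 1
  | j, n + 1 => prodC (if p j then intervalC 0 (x j) else vtx (x j)) (mprN x p (j + 1) n)

def choices : GCell → List (List (ℕ × Bool))
  | [] => [[]]
  | (a, false) :: r => (choices r).map (List.cons (a, false))
  | (a, true) :: r =>
      (choices r).map (List.cons (a, true)) ++ (choices r).map (List.cons (a + 1, true))

lemma sg_expand (γ : ℕ → ℕ → ℕ) :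
    ∀ (c : GCell) (j : ℕ), sgCell γ j c = ((choices c).map (mprL γ j)).sum := by
  intro c
  induction c with
  | nil => intro j; simp [sgCell, choices, mprL]
  | cons e r ih =>
    obtain ⟨a, bb⟩ := e
    cases bb with
    | false =>
      intro j
      simp only [sgCell, choices, List.map_map]
      rw [ih (j + 1), prodC_list_sum, List.map_map]
      congr 1
    | true =>
      intro j
      simp only [sgCell, choices, List.map_append, List.map_map]
      rw [ih (j + 1), intervalC_split, prodC_add_left, prodC_list_sum, prodC_list_sum,
        List.sum_append, List.map_map, List.map_map]
      congr 1

lemma mprL_eq_mprN (γ : ℕ → ℕ → ℕ) (x : ℕ → ℕ) (p : ℕ → Bool) :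
    ∀ (ll : List (ℕ × Bool)) (j : ℕ),
      (∀ i, i < ll.length →
        x (j + i) = γ (j + i) (ll.getD i (1, false)).1 ∧
        p (j + i) = (ll.getD i (1, false)).2) →
      mprL γ j ll = mprN x p j ll.length := by
  intro ll
  induction ll with
  | nil => intro j _; simp [mprL, mprN]
  | cons e r ih =>
    obtain ⟨t, bb⟩ := e
    intro j hcomp
    have h0 := hcomp 0 (by simp)
    simp only [Nat.add_zero, List.getD_cons_zero] at h0
    have htail : ∀ i, i < r.length →
        x (j + 1 + i) = γ (j + 1 + i) (r.getD i (1, false)).1 ∧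
        p (j + 1 + i) = (r.getD i (1, false)).2 := by
      intro i hi
      have := hcomp (i + 1) (by simp; omega)
      simpa [List.getD_cons_succ, Nat.add_assoc, Nat.add_comm 1 i] using this
    cases bb with
    | false =>
      simp only [mprL, List.length_cons, mprN, h0.2]
      rw [ih (j + 1) htail, h0.1]
      simp
    | true =>
      simp only [mprL, List.length_cons, mprN, h0.2]
      rw [ih (j + 1) htail, h0.1]
      simp

lemma choices_spec :
    ∀ (c : GCell) (ll : List (ℕ × Bool)), ll ∈ choices c →
      ll.length = c.length ∧ ∀ i : ℕ,
        (ll.getD i (1, false)).2 = (c.getD i (1, false)).2 ∧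
        ((ll.getD i (1, false)).1 = (c.getD i (1, false)).1 ∨
          ((c.getD i (1, false)).2 = true ∧
            (ll.getD i (1, false)).1 = (c.getD i (1, false)).1 + 1)) := by
  intro c
  induction c with
  | nil =>
    intro ll hll
    simp only [choices, List.mem_singleton] at hll
    subst hll
    exact ⟨rfl, fun i => ⟨rfl, Or.inl rfl⟩⟩
  | cons e r ih =>
    obtain ⟨a, bb⟩ := e
    cases bb with
    | false =>
      intro ll hll
      simp only [choices, List.mem_map] at hll
      obtain ⟨l', hl', rfl⟩ := hll
      refine ⟨by simp [(ih l' hl').1], ?_⟩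
      intro i
      cases i with
      | zero => simp
      | succ i => simpa [List.getD_cons_succ] using (ih l' hl').2 i
    | true =>
      intro ll hll
      simp only [choices, List.mem_append, List.mem_map] at hll
      rcases hll with ⟨l', hl', rfl⟩ | ⟨l', hl', rfl⟩ <;>
        refine ⟨by simp [(ih l' hl').1], ?_⟩ <;> intro i
      · cases i with
        | zero => simp
        | succ i => simpa [List.getD_cons_succ] using (ih l' hl').2 i
      · cases i with
        | zero => simp
        | succ i => simpa [List.getD_cons_succ] using (ih l' hl').2 i

lemma choices_length : ∀ c : GCell, (choices c).length = 2 ^ dimCell c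
  := by
  intro c
  induction c with
  | nil => simp [choices, dimCell]
  | cons e r ih =>
    obtain ⟨a, bb⟩ := e
    cases bb with
    | false => simpa [choices, dimCell, List.filter] using ih
    | true =>
      simp only [choices, List.length_append, List.length_map, ih, dimCell]
      simp [List.filter, pow_succ, dimCell]
      ring

/-- Subgrid lemma: for any `b, k, m, ℓ` with `ℓ ≥ 2` there is `N` such that for every
ℤ/2-linear map `h` from chains of `G[N]^m` to `(ℤ/2)^b`, there is a subgrid
`γ : G[ℓ]^m ↪ G[N]^m` with `h(γ_#(c)) = 0` for every `k`-chain `c` of `G[ℓ]^m`. -/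
theorem stmt10 (b k m l : ℕ) (hb : 1 ≤ b) (hk : 1 ≤ k) (hm : 1 ≤ m) (hl : 2 ≤ l) :
    ∃ N : ℕ, ∀ h : GChain →ₗ[ZMod 2] (Fin b → ZMod 2),
      ∃ γ : ℕ → ℕ → ℕ,
        (∀ i < m, StrictMonoOn (γ i) (Set.Icc 1 l)) ∧
        (∀ i < m, ∀ a, 1 ≤ a → a ≤ l → 1 ≤ γ i a ∧ γ i a ≤ N) ∧
        (∀ c : GChain, (∀ e ∈ c.support, isCellOf m l e ∧ dimCell e = k) →
          h (sgMap γ c) = 0) := by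
  classical
  obtain ⟨N, hN⟩ := ramsey l (by omega) m ((Fin m → Bool) → Fin b → ZMod 2)
  refine ⟨N, ?_⟩
  intro h
  set C : (ℕ → ℕ) → ((Fin m → Bool) → Fin b → ZMod 2) :=
    fun x p => h (mprN x (fun i => if hi : i < m then p ⟨i, hi⟩ else false) 0 m) with hC
  obtain ⟨γ, hmono, hbd, hconst⟩ := hN C
  refine ⟨γ, hmono, hbd, ?_⟩
  intro c hc
  have hcell : ∀ σ ∈ c.support, h (sgCell γ 0 σ) = 0 := by
    intro σ hσ
    obtain ⟨⟨hlen, hbound⟩, hdim⟩ := hc σ hσ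
    set pσ : Fin m → Bool := fun i => (σ.getD i (1, false)).2 with hpσ
    set v : Fin b → ZMod 2 := C (fun i => if i < m then γ i 1 else 0) pσ with hv
    rw [sg_expand, map_list_sum, List.map_map]
    have hall : ∀ y ∈ (choices σ).map (⇑h ∘ mprL γ 0), y = v := by
      intro y hy
      simp only [List.mem_map, Function.comp] at hy
      obtain ⟨ll, hll, rfl⟩ := hy
      obtain ⟨hlen', hpt⟩ := choices_spec σ ll hll
      set t : ℕ → ℕ := fun i => (ll.getD i (1, false)).1 with ht
      have hmpr : mprL γ 0 ll = mprN (fun i => if i < m then γ i (t i) else 0)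
          (fun i => if hi : i < m then pσ ⟨i, hi⟩ else false) 0 ll.length := by
        apply mprL_eq_mprN
        intro i hi
        have him : i < m := by rw [hlen', hlen] at hi; exact hi
        refine ⟨by simp only [Nat.zero_add, if_pos him, ht], ?_⟩
        simp only [Nat.zero_add, dif_pos him, hpσ]
        exact ((hpt i).1).symm
      have htb : ∀ i, i < m → 1 ≤ t i ∧ t i ≤ l := by
        intro i him
        have hilen : i < σ.length := by omega
        have hmem : σ.getD i (1, false) ∈ σ := by
          rw [List.getD_eq_getElem _ _ hilen]; exact List.getElem_mem hilen
        have hbd2 := hbound _ hmem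
        rcases (hpt i).2 with h1 | ⟨h2, h3⟩
        · simp only [ht, h1]
          split_ifs at hbd2 <;> omega
        · simp only [ht, h3]
          rw [if_pos h2] at hbd2; omega
      have hram := hconst t (fun _ => 1)
        (fun i hi => ⟨htb i hi, by simp; omega⟩)
      have hval : h (mprL γ 0 ll) = C (fun i => if i < m then γ i (t i) else 0) pσ := by
        rw [hmpr, hlen', hlen]
      rw [hval, hram]
    rw [List.sum_eq_card_nsmul _ v hall]
    simp only [List.length_map, choices_length, hdim]
    obtain ⟨k', rfl⟩ : ∃ k', k = k' + 1 := ⟨k - 1, by omega⟩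
    have h2v : ∀ w : Fin b → ZMod 2, w + w = 0 := by
      intro w; funext i; exact CharTwo.add_self_eq_zero _
    rw [pow_succ, mul_comm, ← smul_smul, two_smul, h2v]
  rw [show sgMap γ c = c.sum fun e x => x • sgCell γ 0 e from rfl, map_finsuppSum]
  apply Finset.sum_eq_zero
  intro σ hσ
  dsimp only
  rw [map_smul, hcell σ hσ, smul_zero]
end
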